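/- Let (a_i)_{i∈ℤ} and (b_i)_{i∈ℤ} be real sequences with a_{i+5} = a_i and b_{i+5} = b_i. Suppose every solution (V_i)_{i∈ℤ} of the recursion V_i = a_i V_{i-1} - b_i V_{i-2} + V_{i-3} is 5-periodic (V_{i+5} = V_i for all i). Then b_i = a_{i+2} for all i, i.e., the dual recursion W_i = a_i W_{i-1} - W_{i-2} is well defined from the same coefficients. -/
import Mathlib

namespace PentAux

variable (a b : ℤ → ℝ)

/-- forward transfer step at base position `k`: maps `(V k, V (k+1), V (k+2))`
to `(V (k+1), V (k+2), V (k+3))`. -/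
def fwd (k : ℤ) (p : ℝ × ℝ × ℝ) : ℝ × ℝ × ℝ :=
  (p.2.1, p.2.2, a (k + 3) * p.2.2 - b (k + 3) * p.2.1 + p.1)

/-- backward step: maps state at `k` to state at `k - 1`. -/
def bwd (k : ℤ) (p : ℝ × ℝ × ℝ) : ℝ × ℝ × ℝ :=
  (p.2.2 - a (k + 2) * p.2.1 + b (k + 2) * p.1, p.1, p.2.1)

lemma fwd_bwd (k : ℤ) (p : ℝ × ℝ × ℝ) : fwd a b (k - 1) (bwd a b k p) = p := by
  simp only [fwd, bwd, show k - 1 + 3 = k + 2 by ring]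
  refine Prod.ext rfl (Prod.ext rfl ?_)
  ring

variable (m : ℤ) (t : ℝ × ℝ × ℝ)

def F : ℕ → ℝ × ℝ × ℝ
  | 0 => t
  | n + 1 => fwd a b (m + n) (F n)

def Bk : ℕ → ℝ × ℝ × ℝ
  | 0 => t
  | n + 1 => bwd a b (m - n) (Bk n)

/-- the state sequence: `S j` is the state at position `m + j`. -/
def S (j : ℤ) : ℝ × ℝ × ℝ :=
  if 0 ≤ j then F a b m t j.toNat else Bk a b m t (-j).toNat

lemma S_ofNat (n : ℕ) : S a b m t n = F a b m t n := by
  simp [S]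

lemma S_neg (n : ℕ) : S a b m t (-(n : ℤ)) = Bk a b m t n := by
  cases n with
  | zero => simp [S, F, Bk]
  | succ k =>
    have h : ¬ (0 : ℤ) ≤ -(((k + 1 : ℕ)) : ℤ) := by push_cast; omega
    rw [S, if_neg h]
    norm_num

lemma Sstep (j : ℤ) : S a b m t (j + 1) = fwd a b (m + j) (S a b m t j) := by
  cases j with
  | ofNat n =>
    rw [Int.ofNat_eq_natCast]
    rw [show ((n : ℤ)) + 1 = ((n + 1 : ℕ) : ℤ) by push_cast; ring, S_ofNat, S_ofNat]
    rfl
  | negSucc n =>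
    have h1 : (Int.negSucc n) = -((n + 1 : ℕ) : ℤ) := by
      rw [Int.negSucc_eq]; push_cast; ring
    rw [h1, show -(((n + 1 : ℕ)) : ℤ) + 1 = -((n : ℕ) : ℤ) by push_cast; ring,
      S_neg, S_neg]
    have h3 : Bk a b m t (n + 1) = bwd a b (m - n) (Bk a b m t n) := rfl
    rw [h3, show m + -(((n + 1 : ℕ)) : ℤ) = (m - (n : ℤ)) - 1 by push_cast; ring,
      fwd_bwd]

lemma Srec (j : ℤ) :
    (S a b m t (j + 3)).1 =
      a (m + j + 3) * (S a b m t (j + 2)).1 - b (m + j + 3) * (S a b m t (j + 1)).1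
        + (S a b m t j).1 := by
  have h1 := Sstep a b m t j
  have h2 := Sstep a b m t (j + 1)
  have h3 := Sstep a b m t (j + 2)
  rw [show j + 3 = j + 2 + 1 by ring, h3, show j + 2 = j + 1 + 1 by ring, h2, h1]
  simp only [fwd]

end PentAux

/-- If all solutions of the 5-periodic third order recursion
`V i = a i * V (i-1) - b i * V (i-2) + V (i-3)` are 5-periodic, then `b i = a (i+2)`. -/
theorem pentagramma_coeff_relation (a b : ℤ → ℝ)
    (ha : ∀ i, a (i + 5) = a i) (hb : ∀ i, b (i + 5) = b i)
    (hsuper : ∀ V : ℤ → ℝ,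
      (∀ i, V i = a i * V (i - 1) - b i * V (i - 2) + V (i - 3)) →
      (∀ i, V (i + 5) = V i)) :
    ∀ i, b i = a (i + 2) := by
  have S0 : ∀ t : ℝ × ℝ × ℝ, ∀ m : ℤ, PentAux.S a b m t 0 = t := by
    intro t m; rfl
  have main : ∀ m : ℤ, b (m + 3) = a (m + 5) := by
    intro m
    have sol : ∀ t : ℝ × ℝ × ℝ, (PentAux.S a b m t 3).2.2 = t.1 := by
      intro t
      set V : ℤ → ℝ := fun i => (PentAux.S a b m t (i - m)).1 with hV
      have hrec : ∀ i, V i = a i * V (i - 1) - b i * V (i - 2) + V (i - 3) := by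
        intro i
        have h := PentAux.Srec a b m t (i - m - 3)
        rw [show i - m - 3 + 3 = i - m by ring, show m + (i - m - 3) + 3 = i by ring,
          show i - m - 3 + 2 = i - 1 - m by ring, show i - m - 3 + 1 = i - 2 - m by ring,
          show i - m - 3 = i - 3 - m by ring] at h
        exact h
      have hper := hsuper V hrec m
      have e5 : V (m + 5) = (PentAux.S a b m t 5).1 := by
        simp only [hV]; rw [show m + 5 - m = (5 : ℤ) by ring]
      have e0 : V m = t.1 := by
        simp only [hV]; rw [show m - m = (0 : ℤ) by ring, S0]
      have c1 : PentAux.S a b m t 5 = PentAux.fwd a b (m + 4) (PentAux.S a b m t 4) := by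
        rw [show (5 : ℤ) = 4 + 1 by ring]; exact PentAux.Sstep a b m t 4
      have c2 : PentAux.S a b m t 4 = PentAux.fwd a b (m + 3) (PentAux.S a b m t 3) := by
        rw [show (4 : ℤ) = 3 + 1 by ring]; exact PentAux.Sstep a b m t 3
      calc (PentAux.S a b m t 3).2.2 = (PentAux.S a b m t 5).1 := by rw [c1, c2]; rfl
        _ = V (m + 5) := e5.symm
        _ = V m := hper
        _ = t.1 := e0
    have expand : ∀ t : ℝ × ℝ × ℝ, PentAux.S a b m t 3 =
        PentAux.fwd a b (m + 2) (PentAux.fwd a b (m + 1) (PentAux.fwd a b (m + 0) t)) := by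
      intro t
      rw [show (3 : ℤ) = 2 + 1 by ring, PentAux.Sstep, show (2 : ℤ) = 1 + 1 by ring,
        PentAux.Sstep, show (1 : ℤ) = 0 + 1 by ring, PentAux.Sstep, S0]
    have e1 := sol (1, 0, 0)
    have e2 := sol (0, 1, 0)
    rw [expand] at e1 e2
    simp only [PentAux.fwd, show m + 0 + 3 = m + 3 by ring, show m + 1 + 3 = m + 4 by ring,
      show m + 2 + 3 = m + 5 by ring, mul_zero, mul_one, zero_mul, one_mul, sub_zero,
      zero_sub, add_zero, zero_add] at e1 e2
    linear_combination (-1 : ℝ) * e2 - b (m + 3) * e1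
  intro i
  have h := main (i - 3)
  rw [show i - 3 + 3 = i by ring, show i - 3 + 5 = i + 2 by ring] at h
  exact h
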